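/- For every graph G, core(G) = core(G[L^c(G)]) ∪ (core(G) ∩ L(G)), where core(G) ∩ L(G) equals the intersection over all maximum independent sets S of G of S ∩ L(G), and core(G) ∩ L(G) ⊆ nucleus(G). -/

import Mathlib

open Finset

variable {V : Type*} [Fintype V] [DecidableEq V] (G : SimpleGraph V) [DecidableRel G.Adj]

/-- `N(S)`: the set of vertices adjacent to some vertex of `S`. -/
def nbhd (S : Finset V) : Finset V := S.biUnion (fun v => G.neighborFinset v)

/-- `S` is an independent set of `G`. -/
def Indep (S : Finset V) : Prop := ∀ u ∈ S, ∀ v ∈ S, ¬ G.Adj u v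

/-- The difference `d_G(S) = |S| - |N(S)|`. -/
def diffI (S : Finset V) : ℤ := (S.card : ℤ) - ((nbhd G S).card : ℤ)

/-- `S` is a maximum independent set of `G`. -/
def IsMaxIndep (S : Finset V) : Prop :=
  Indep G S ∧ ∀ T : Finset V, Indep G T → T.card ≤ S.card

/-- `I` is a critical independent set of `G`. -/
def IsCritIndep (I : Finset V) : Prop :=
  Indep G I ∧ ∀ J : Finset V, Indep G J → diffI G J ≤ diffI G I

/-- `I` is a maximum critical independent set of `G`. -/
def IsMaxCritIndep (I : Finset V) : Prop :=
  IsCritIndep G I ∧ ∀ J : Finset V, IsCritIndep G J → J.card ≤ I.card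

/-- `core(G)`: intersection of all maximum independent sets. -/
def core : Set V := {v | ∀ S : Finset V, IsMaxIndep G S → v ∈ S}

/-- `corona(G)`: union of all maximum independent sets. -/
def corona : Set V := {v | ∃ S : Finset V, IsMaxIndep G S ∧ v ∈ S}

/-- `nucleus(G)`: intersection of all maximum critical independent sets. -/
def nucleus : Set V := {v | ∀ S : Finset V, IsMaxCritIndep G S → v ∈ S}

/-- `diadem(G)`: union of all maximum critical independent sets. -/
def diadem : Set V := {v | ∃ S : Finset V, IsMaxCritIndep G S ∧ v ∈ S}

/-- `ker(G)`: intersection of all critical independent sets. -/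
def kerS : Set V := {v | ∀ S : Finset V, IsCritIndep G S → v ∈ S}

/-- A matching of `G`, given as an involution of the vertex set:
unmatched vertices are fixed points, matched vertices are sent to their partner. -/
def IsMatching (M : V → V) : Prop :=
  Function.Involutive M ∧ ∀ v, M v ≠ v → G.Adj v (M v)

/-- Twice the number of edges of the matching `M`, i.e. the number of matched vertices. -/
def matchSize (M : V → V) : ℕ := (univ.filter fun v => M v ≠ v).card

/-- `M` is a maximum matching of `G`. -/
def IsMaxMatching (M : V → V) : Prop :=
  IsMatching G M ∧ ∀ M' : V → V, IsMatching G M' → matchSize M' ≤ matchSize M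

/-- `M` is a matching of the induced subgraph `G[L]`. -/
def IsMatchingOn (L : Finset V) (M : V → V) : Prop :=
  IsMatching G M ∧ ∀ v, M v ≠ v → v ∈ L

/-- `M` is a maximum matching of the induced subgraph `G[L]`. -/
def IsMaxMatchingOn (L : Finset V) (M : V → V) : Prop :=
  IsMatchingOn G L M ∧ ∀ M' : V → V, IsMatchingOn G L M' → matchSize M' ≤ matchSize M

/-- `S` is a maximum independent set of the induced subgraph `G[L]`. -/
def IsMaxIndepOn (L : Finset V) (S : Finset V) : Prop :=
  S ⊆ L ∧ Indep G S ∧ ∀ T : Finset V, T ⊆ L → Indep G T → T.card ≤ S.card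

/-- `core` of the induced subgraph `G[L]`. -/
def coreOn (L : Finset V) : Set V := {v | ∀ S : Finset V, IsMaxIndepOn G L S → v ∈ S}

/-- `D(G[L])`: vertices of `L` missed by some maximum matching of `G[L]`. -/
def Dset (L : Finset V) : Set V := {v | v ∈ L ∧ ∃ M : V → V, IsMaxMatchingOn G L M ∧ M v = v}

/-- The Larson boundary `∂_L(G)` of the set `L`. -/
def boundaryL (L : Finset V) : Set V := {v | v ∈ L ∧ ∃ w, w ∉ L ∧ G.Adj v w}

/-- The critical difference `d(G)`. -/
noncomputable def critDiff : ℤ := sSup {d : ℤ | ∃ X : Finset V, diffI G X = d}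

/-- The difference of `S` computed in the induced subgraph `G[L]`. -/
def diffOn (L : Finset V) (S : Finset V) : ℤ := (S.card : ℤ) - ((nbhd G S ∩ L).card : ℤ)

/-- The critical difference of the induced subgraph `G[L]`. -/
noncomputable def critDiffOn (L : Finset V) : ℤ := sSup {d : ℤ | ∃ X : Finset V, X ⊆ L ∧ diffOn G L X = d}

/-- `G` is a König–Egerváry graph: `α(G) + μ(G) = |V(G)|`. -/
def KonigEgervary : Prop :=
  ∃ (S : Finset V) (M : V → V), IsMaxIndep G S ∧ IsMaxMatching G M ∧
    2 * S.card + matchSize M = 2 * Fintype.card V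
lemma mem_nbhd {S : Finset V} {v : V} : v ∈ nbhd G S ↔ ∃ u ∈ S, G.Adj u v := by
  simp [nbhd, SimpleGraph.mem_neighborFinset]


section
variable {G}


lemma nbhd_mono {A B : Finset V} (h : A ⊆ B) : nbhd G A ⊆ nbhd G B := by
  intro v hv; rw [mem_nbhd] at hv ⊢; obtain ⟨u, hu, ha⟩ := hv; exact ⟨u, h hu, ha⟩

lemma nbhd_union {A B : Finset V} : nbhd G (A ∪ B) = nbhd G A ∪ nbhd G B := by
  ext v
  simp only [mem_nbhd, mem_union]
  constructor
  · rintro ⟨u, hu | hu, ha⟩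
    · exact Or.inl ⟨u, hu, ha⟩
    · exact Or.inr ⟨u, hu, ha⟩
  · rintro (⟨u, hu, ha⟩ | ⟨u, hu, ha⟩)
    · exact ⟨u, Or.inl hu, ha⟩
    · exact ⟨u, Or.inr hu, ha⟩

lemma indep_not_mem_nbhd {A : Finset V} (h : Indep G A) {v : V} (hv : v ∈ A) :
    v ∉ nbhd G A := by
  rw [mem_nbhd]; rintro ⟨u, hu, ha⟩; exact h u hu v hv ha

lemma supermod {A B : Finset V} :
    diffI G A + diffI G B ≤ diffI G (A ∪ B) + diffI G (A ∩ B) := by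
  have h1 : (A ∪ B).card + (A ∩ B).card = A.card + B.card := card_union_add_card_inter A B
  have h2 : nbhd G (A ∩ B) ⊆ nbhd G A ∩ nbhd G B := by
    intro v hv; rw [mem_inter]
    exact ⟨nbhd_mono inter_subset_left hv, nbhd_mono inter_subset_right hv⟩
  have h3 : (nbhd G (A ∪ B)).card + (nbhd G (A ∩ B)).card ≤
      (nbhd G A).card + (nbhd G B).card := by
    have := card_union_add_card_inter (nbhd G A) (nbhd G B)
    have h4 : (nbhd G (A ∪ B)).card = (nbhd G A ∪ nbhd G B).card := by rw [nbhd_union]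
    have h5 := card_le_card h2
    omega
  unfold diffI
  omega

lemma indepPart_indep {A : Finset V} : Indep G (A \ nbhd G A) := by
  intro u hu v hv ha
  rw [mem_sdiff] at hu hv
  exact hv.2 ((mem_nbhd G).2 ⟨u, hu.1, ha⟩)

lemma diffI_le_indepPart {A : Finset V} : diffI G A ≤ diffI G (A \ nbhd G A) := by
  set B := A \ nbhd G A with hB
  have hsub : nbhd G B ⊆ nbhd G A \ (A ∩ nbhd G A) := by
    intro w hw
    rw [mem_sdiff]
    refine ⟨nbhd_mono sdiff_subset hw, ?_⟩
    rw [mem_inter]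
    rintro ⟨hwA, -⟩
    rw [mem_nbhd] at hw
    obtain ⟨b, hb, hadj⟩ := hw
    rw [hB, mem_sdiff] at hb
    exact hb.2 ((mem_nbhd G).2 ⟨w, hwA, hadj.symm⟩)
  have h1 : B.card + (A ∩ nbhd G A).card = A.card := by
    have : A \ nbhd G A = A \ (A ∩ nbhd G A) := by
      ext x; simp only [mem_sdiff, mem_inter]; tauto
    rw [hB, this]
    exact card_sdiff_add_card_eq_card inter_subset_left
  have h2 : (nbhd G B).card + (A ∩ nbhd G A).card ≤ (nbhd G A).card := by
    have := card_le_card hsub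
    have h3 : (nbhd G A \ (A ∩ nbhd G A)).card = (nbhd G A).card - (A ∩ nbhd G A).card := by
      apply card_sdiff_of_subset inter_subset_right
    have h4 := card_le_card (inter_subset_right (s₁ := A) (s₂ := nbhd G A))
    omega
  unfold diffI
  omega







lemma crit_max {I : Finset V} (hI : IsCritIndep G I) (X : Finset V) :
    diffI G X ≤ diffI G I :=
  le_trans diffI_le_indepPart (hI.2 _ indepPart_indep)

lemma exists_maxIndep : ∃ S : Finset V, IsMaxIndep G S := by
  classical
  obtain ⟨S, hS, hmax⟩ := Finset.exists_max_image (univ.filter (fun S : Finset V => Indep G S))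
    card ⟨∅, mem_filter.2 ⟨mem_univ _, fun u hu => by simp at hu⟩⟩
  refine ⟨S, (mem_filter.1 hS).2, fun T hT => hmax T (by simp [hT])⟩

/-- Hall-based bound: for a critical independent set `I` and any independent `S`,
`|S ∩ (I ∪ N(I))| ≤ |I|`. -/
lemma card_inter_L_le {I S : Finset V} (hI : IsCritIndep G I) (hS : Indep G S) :
    (S ∩ (I ∪ nbhd G I)).card ≤ I.card := by
  classical
  set X := S ∩ nbhd G I with hX
  -- Hall condition on the family of I-neighborhoods of vertices of X
  have hall : ∀ A : Finset {x // x ∈ X},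
      A.card ≤ (A.biUnion (fun x => G.neighborFinset x.1 ∩ I)).card := by
    intro A
    by_contra hcon
    push_neg at hcon
    set T : Finset V := A.image Subtype.val with hT
    have hTcard : T.card = A.card := card_image_of_injective _ Subtype.val_injective
    set NT : Finset V := A.biUnion (fun x => G.neighborFinset x.1 ∩ I) with hNT
    -- J = I \ N(T) has larger diff
    set J : Finset V := I \ NT with hJ
    have hJI : J ⊆ I := sdiff_subset
    have hNTI : NT ⊆ I := by
      intro v hv; rw [hNT, mem_biUnion] at hv; obtain ⟨x, -, hx⟩ := hv
      exact (mem_inter.1 hx).2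
    have hJcard : (J.card : ℤ) = (I.card : ℤ) - NT.card := by
      rw [hJ, card_sdiff_of_subset]
      · have := card_le_card hNTI; push_cast; omega
      · exact fun v hv => hNTI hv
    -- N(J) ⊆ N(I) \ T
    have hNJ : nbhd G J ⊆ nbhd G I \ T := by
      intro w hw
      rw [mem_sdiff]
      refine ⟨nbhd_mono hJI hw, ?_⟩
      intro hwT
      rw [hT, mem_image] at hwT
      obtain ⟨x, hxA, hxw⟩ := hwT
      rw [mem_nbhd] at hw
      obtain ⟨j, hjJ, hadj⟩ := hw
      rw [hJ, mem_sdiff] at hjJ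
      apply hjJ.2
      rw [hNT, mem_biUnion]
      exact ⟨x, hxA, by rw [mem_inter, SimpleGraph.mem_neighborFinset, hxw]
                        exact ⟨hadj.symm, hjJ.1⟩⟩
    have hTsub : T ⊆ nbhd G I := by
      intro v hv; rw [hT, mem_image] at hv; obtain ⟨x, -, rfl⟩ := hv
      have hx2 : (x : V) ∈ S ∩ nbhd G I := x.2
      exact (mem_inter.1 hx2).2
    have hNJcard : ((nbhd G J).card : ℤ) ≤ (nbhd G I).card - T.card := by
      have h1 := card_le_card hNJ
      have h2 : (nbhd G I \ T).card = (nbhd G I).card - T.card := card_sdiff_of_subset hTsub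
      have h3 := card_le_card hTsub
      push_cast; omega
    have hJindep : Indep G J := fun u hu v hv => hI.1 u (hJI hu) v (hJI hv)
    have := hI.2 J hJindep
    rw [diffI, diffI] at this
    -- diffI J ≥ |I| - |NT| - |N(I)| + |T| > |I| - |N(I)|
    have : (J.card : ℤ) - (nbhd G J).card > (I.card : ℤ) - (nbhd G I).card := by
      omega
    omega
  obtain ⟨f, hfinj, hf⟩ := (Finset.all_card_le_biUnion_card_iff_exists_injective
    (fun x : {x // x ∈ X} => G.neighborFinset x.1 ∩ I)).1 hall
  -- f maps X injectively into I \ S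
  have hfmem : ∀ x : {x // x ∈ X}, f x ∈ I \ S := by
    intro x
    have h1 := hf x
    rw [mem_inter] at h1
    rw [mem_sdiff]
    refine ⟨h1.2, fun hfS => ?_⟩
    have hx2 : (x : V) ∈ S ∩ nbhd G I := x.2
    have hadj : G.Adj x.1 (f x) := by
      have := h1.1; rwa [SimpleGraph.mem_neighborFinset] at this
    exact hS x.1 (mem_inter.1 hx2).1 (f x) hfS hadj
  have hXcard : X.card ≤ (I \ S).card := by
    have e1 : X.card = Fintype.card {x // x ∈ X} := (Fintype.card_coe X).symm
    have e2 : (I \ S).card = Fintype.card {x // x ∈ I \ S} := (Fintype.card_coe _).symm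
    rw [e1, e2]
    exact Fintype.card_le_of_injective (fun x => ⟨f x, hfmem x⟩)
      (fun a b hab => hfinj (congrArg Subtype.val hab))
  -- now assemble
  have hdisj : Disjoint I (nbhd G I) := by
    rw [disjoint_left]; exact fun v hv => indep_not_mem_nbhd hI.1 hv
  have hsplit : S ∩ (I ∪ nbhd G I) = (S ∩ I) ∪ X := by rw [hX, inter_union_distrib_left]
  have hcard : (S ∩ (I ∪ nbhd G I)).card ≤ (S ∩ I).card + X.card := by
    rw [hsplit]; exact card_union_le _ _
  have hIS : (S ∩ I).card + (I \ S).card = I.card := by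
    have : S ∩ I = I \ (I \ S) := by ext x; simp only [mem_inter, mem_sdiff]; tauto
    rw [this]
    exact card_sdiff_add_card_eq_card sdiff_subset
  omega

lemma indep_union {I T : Finset V} (hI : Indep G I) (hT : Indep G T)
    (h : ∀ t ∈ T, t ∉ nbhd G I) : Indep G (I ∪ T) := by
  intro u hu v hv hadj
  rw [mem_union] at hu hv
  rcases hu with hu | hu <;> rcases hv with hv | hv
  · exact hI u hu v hv hadj
  · exact h v hv ((mem_nbhd G).2 ⟨u, hu, hadj⟩)
  · exact h u hu ((mem_nbhd G).2 ⟨v, hv, hadj.symm⟩)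
  · exact hT u hu v hv hadj

/-- Every critical independent set extends to a maximum independent set,
meeting `J ∪ N(J)` exactly in `J`. -/
lemma extend_crit {J : Finset V} (hJ : IsCritIndep G J) :
    ∃ S : Finset V, IsMaxIndep G S ∧ S ∩ (J ∪ nbhd G J) = J := by
  obtain ⟨S0, hS0⟩ := exists_maxIndep (G := G)
  set T := J ∪ (S0 \ (J ∪ nbhd G J)) with hT
  have hTindep : Indep G T := by
    apply indep_union hJ.1
    · exact fun u hu v hv hadj => hS0.1 u (mem_sdiff.1 hu).1 v (mem_sdiff.1 hv).1 hadj
    · intro t ht hnb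
      exact (mem_sdiff.1 ht).2 (mem_union_right _ hnb)
  have hdisj : Disjoint J (S0 \ (J ∪ nbhd G J)) := by
    rw [disjoint_left]
    intro a ha ha2
    exact (mem_sdiff.1 ha2).2 (mem_union_left _ ha)
  have hcard1 : (S0 \ (J ∪ nbhd G J)).card = S0.card - (S0 ∩ (J ∪ nbhd G J)).card := by
    have : S0 \ (J ∪ nbhd G J) = S0 \ (S0 ∩ (J ∪ nbhd G J)) := by
      ext x; simp only [mem_sdiff, mem_inter]; tauto
    rw [this, card_sdiff_of_subset inter_subset_left]
  have hle := card_inter_L_le hJ hS0.1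
  have hcard2 : S0.card ≤ T.card := by
    rw [hT, card_union_of_disjoint hdisj, hcard1]
    have := card_le_card (inter_subset_left (s₁ := S0) (s₂ := J ∪ nbhd G J))
    omega
  refine ⟨T, ⟨hTindep, fun U hU => le_trans (hS0.2 U hU) hcard2⟩, ?_⟩
  ext x
  simp only [mem_inter, hT, mem_union, mem_sdiff]
  constructor
  · rintro ⟨hx1 | ⟨-, hx2⟩, hx3⟩
    · exact hx1
    · exact absurd hx3 hx2
  · intro hx
    exact ⟨Or.inl hx, Or.inl hx⟩

lemma maxcrit_sub {I J : Finset V} (hI : IsMaxCritIndep G I) (hJ : IsMaxCritIndep G J) :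
    J \ nbhd G I ⊆ I := by
  have hd : diffI G (I ∪ J) = diffI G I := by
    have h1 := supermod (G := G) (A := I) (B := J)
    have h2 := crit_max hI.1 (I ∩ J)
    have h3 := crit_max hI.1 (I ∪ J)
    have h4 : diffI G I ≤ diffI G J := hJ.1.2 I hI.1.1
    omega
  set D := (I ∪ J) \ nbhd G (I ∪ J) with hD
  have hDd : diffI G D = diffI G I := by
    have h1 := diffI_le_indepPart (G := G) (A := I ∪ J)
    have h2 := hI.1.2 D indepPart_indep
    rw [← hD] at h1
    omega
  set Z := I ∪ (J \ nbhd G I) with hZ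
  have hIunD : I ∪ D = Z := by
    ext x
    simp only [hD, hZ, mem_union, mem_sdiff, nbhd_union, mem_union]
    constructor
    · rintro (hx | ⟨hx1 | hx1, hx2⟩)
      · exact Or.inl hx
      · exact Or.inl hx1
      · exact Or.inr ⟨hx1, fun h => hx2 (Or.inl h)⟩
    · rintro (hx | ⟨hx1, hx2⟩)
      · exact Or.inl hx
      · refine Or.inr ⟨Or.inr hx1, ?_⟩
        rintro (h | h)
        · exact hx2 h
        · exact indep_not_mem_nbhd hJ.1.1 hx1 h
  have hZindep : Indep G Z := by
    apply indep_union hI.1.1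
    · exact fun u hu v hv hadj => hJ.1.1 u (mem_sdiff.1 hu).1 v (mem_sdiff.1 hv).1 hadj
    · exact fun t ht => (mem_sdiff.1 ht).2
  have hZd : diffI G Z = diffI G I := by
    have h1 := supermod (G := G) (A := I) (B := D)
    rw [hIunD] at h1
    have h2 := crit_max hI.1 (I ∩ D)
    have h3 := crit_max hI.1 Z
    omega
  have hZcrit : IsCritIndep G Z := ⟨hZindep, fun K hK => (hI.1.2 K hK).trans_eq hZd.symm⟩
  have hZI : Z = I := (eq_of_subset_of_card_le subset_union_left (hI.2 Z hZcrit)).symm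
  intro x hx
  have : x ∈ Z := mem_union_right _ hx
  rwa [hZI] at this

lemma L_subset {I J : Finset V} (hI : IsMaxCritIndep G I) (hJ : IsMaxCritIndep G J) :
    I ∪ nbhd G I ⊆ J ∪ nbhd G J := by
  have hIJcard : I.card = J.card :=
    le_antisymm (hJ.2 I hI.1) (hI.2 J hJ.1)
  have hJsub : J ⊆ I ∪ nbhd G I := by
    intro x hx
    by_cases h : x ∈ nbhd G I
    · exact mem_union_right _ h
    · exact mem_union_left _ (maxcrit_sub hI hJ (mem_sdiff.2 ⟨hx, h⟩))
  have hIsub : I ⊆ J ∪ nbhd G J := by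
    intro x hx
    by_cases h : x ∈ nbhd G J
    · exact mem_union_right _ h
    · exact mem_union_left _ (maxcrit_sub hJ hI (mem_sdiff.2 ⟨hx, h⟩))
  -- it remains to prove nbhd G I ⊆ J ∪ nbhd G J
  have hd : diffI G (I ∪ J) = diffI G J := by
    have h1 := supermod (G := G) (A := I) (B := J)
    have h2 := crit_max hI.1 (I ∩ J)
    have h3 := crit_max hI.1 (I ∪ J)
    have h4 : diffI G I ≤ diffI G J := hJ.1.2 I hI.1.1
    have h5 : diffI G J ≤ diffI G I := hI.1.2 J hJ.1.1
    omega
  set A := nbhd G I \ nbhd G J with hA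
  set B := J ∩ nbhd G I with hB
  have hBA : B ⊆ A := by
    intro x hx
    rw [hB, mem_inter] at hx
    rw [hA, mem_sdiff]
    exact ⟨hx.2, indep_not_mem_nbhd hJ.1.1 hx.1⟩
  -- card A = card (I \ J)
  have hAcard : A.card = I.card - (I ∩ J).card := by
    have e1 : (nbhd G I \ nbhd G J).card + (nbhd G J).card = (nbhd G I ∪ nbhd G J).card :=
      card_sdiff_add_card (nbhd G I) (nbhd G J)
    have e2 : (I ∪ J).card + (I ∩ J).card = I.card + J.card := card_union_add_card_inter I J
    have e3 : nbhd G (I ∪ J) = nbhd G I ∪ nbhd G J := nbhd_union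
    have e4 : diffI G (I ∪ J) = ((I ∪ J).card : ℤ) - ((nbhd G I ∪ nbhd G J).card : ℤ) := by
      rw [diffI, e3]
    have e5 : diffI G J = (J.card : ℤ) - ((nbhd G J).card : ℤ) := rfl
    have := card_le_card (inter_subset_left (s₁ := I) (s₂ := J))
    rw [e4, e5] at hd
    rw [hA]
    omega
  have hBcard : B.card = I.card - (I ∩ J).card := by
    have hBeq : B = J \ I := by
      ext x
      rw [hB, mem_inter, mem_sdiff]
      constructor
      · rintro ⟨hx1, hx2⟩
        exact ⟨hx1, fun hxI => indep_not_mem_nbhd hI.1.1 hxI hx2⟩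
      · rintro ⟨hx1, hx2⟩
        refine ⟨hx1, ?_⟩
        rcases mem_union.1 (hJsub hx1) with h | h
        · exact absurd h hx2
        · exact h
    have : (J \ I).card = J.card - (J ∩ I).card := by
      have : J \ I = J \ (J ∩ I) := by ext x; simp only [mem_sdiff, mem_inter]; tauto
      rw [this, card_sdiff_of_subset inter_subset_left]
    rw [hBeq, this, inter_comm, hIJcard]
  have hABeq : A = B := (eq_of_subset_of_card_le hBA (le_of_eq (hAcard.trans hBcard.symm))).symm
  intro x hx
  rcases mem_union.1 hx with h | h
  · exact hIsub h
  · by_cases h2 : x ∈ nbhd G J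
    · exact mem_union_right _ h2
    · have : x ∈ A := mem_sdiff.2 ⟨h, h2⟩
      rw [hABeq, hB] at this
      exact mem_union_left _ (mem_inter.1 this).1

lemma L_eq {I J : Finset V} (hI : IsMaxCritIndep G I) (hJ : IsMaxCritIndep G J) :
    I ∪ nbhd G I = J ∪ nbhd G J :=
  le_antisymm (L_subset hI hJ) (L_subset hJ hI)









lemma nbhd_sub_L {I : Finset V} : nbhd G I ⊆ I ∪ nbhd G I := subset_union_right

lemma glue_max {I T : Finset V} (hI : IsCritIndep G I)
    (hT : IsMaxIndepOn G (univ \ (I ∪ nbhd G I)) T) : IsMaxIndep G (I ∪ T) := by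
  have hTL : ∀ t ∈ T, t ∉ I ∪ nbhd G I := by
    intro t ht
    exact (mem_sdiff.1 (hT.1 ht)).2
  constructor
  · apply indep_union hI.1 hT.2.1
    intro t ht hnb
    exact hTL t ht (mem_union_right _ hnb)
  · intro U hU
    have h1 : (U ∩ (I ∪ nbhd G I)).card ≤ I.card := card_inter_L_le hI hU
    have h2 : (U \ (I ∪ nbhd G I)).card ≤ T.card := by
      apply hT.2.2
      · intro x hx
        rw [mem_sdiff] at hx ⊢
        exact ⟨mem_univ x, hx.2⟩
      · exact fun u hu v hv => hU u (mem_sdiff.1 hu).1 v (mem_sdiff.1 hv).1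
    have h3 : U.card = (U ∩ (I ∪ nbhd G I)).card + (U \ (I ∪ nbhd G I)).card :=
      (card_inter_add_card_sdiff U (I ∪ nbhd G I)).symm
    have h4 : (I ∪ T).card = I.card + T.card := by
      apply card_union_of_disjoint
      rw [disjoint_left]
      exact fun a ha haT => hTL a haT (mem_union_left _ ha)
    omega

lemma restrict_max {I S : Finset V} (hI : IsCritIndep G I) (hS : IsMaxIndep G S) :
    IsMaxIndepOn G (univ \ (I ∪ nbhd G I)) (S \ (I ∪ nbhd G I)) := by
  refine ⟨?_, ?_, ?_⟩
  · intro x hx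
    rw [mem_sdiff] at hx ⊢
    exact ⟨mem_univ x, hx.2⟩
  · exact fun u hu v hv => hS.1 u (mem_sdiff.1 hu).1 v (mem_sdiff.1 hv).1
  · intro T hTL hT
    have hTL' : ∀ t ∈ T, t ∉ I ∪ nbhd G I := fun t ht => (mem_sdiff.1 (hTL ht)).2
    have hind : Indep G (I ∪ T) := by
      apply indep_union hI.1 hT
      intro t ht hnb
      exact hTL' t ht (mem_union_right _ hnb)
    have h1 : (I ∪ T).card ≤ S.card := hS.2 _ hind
    have h2 : (I ∪ T).card = I.card + T.card := by
      apply card_union_of_disjoint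
      rw [disjoint_left]
      exact fun a ha haT => hTL' a haT (mem_union_left _ ha)
    have h3 : S.card = (S ∩ (I ∪ nbhd G I)).card + (S \ (I ∪ nbhd G I)).card :=
      (card_inter_add_card_sdiff S (I ∪ nbhd G I)).symm
    have h4 : (S ∩ (I ∪ nbhd G I)).card ≤ I.card := card_inter_L_le hI hS.1
    omega


end

theorem stmt19 (I : Finset V) (hI : IsMaxCritIndep G I) :
    core G = coreOn G (univ \ (I ∪ nbhd G I)) ∪ (core G ∩ ↑(I ∪ nbhd G I)) ∧
    (core G ∩ ↑(I ∪ nbhd G I) =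
      ⋂ (S : Finset V) (_ : IsMaxIndep G S), ((S : Set V) ∩ ↑(I ∪ nbhd G I))) ∧
    core G ∩ ↑(I ∪ nbhd G I) ⊆ nucleus G := by
  refine ⟨?_, ?_, ?_⟩
  · ext v
    constructor
    · intro hv
      by_cases hL : v ∈ I ∪ nbhd G I
      · exact Or.inr ⟨hv, by exact_mod_cast hL⟩
      · refine Or.inl ?_
        intro T hT
        have := hv _ (glue_max hI.1 hT)
        rcases mem_union.1 this with h | h
        · exact absurd (mem_union_left _ h) hL
        · exact h
    · rintro (hv | hv)
      · intro S hS
        have := hv _ (restrict_max hI.1 hS)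
        exact (mem_sdiff.1 this).1
      · exact hv.1
  · ext v
    simp only [Set.mem_inter_iff, Set.mem_iInter, Finset.coe_union, Set.mem_union,
      Finset.mem_coe]
    constructor
    · rintro ⟨hc, hL⟩ S hS
      exact ⟨hc S hS, hL⟩
    · intro h
      obtain ⟨S0, hS0⟩ := exists_maxIndep (G := G)
      exact ⟨fun S hS => (h S hS).1, (h S0 hS0).2⟩
  · rintro v ⟨hc, hL⟩ J hJ
    obtain ⟨S, hS, hSJ⟩ := extend_crit hJ.1
    have hv : v ∈ J ∪ nbhd G J := by
      have : v ∈ I ∪ nbhd G I := by exact_mod_cast hL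
      exact L_eq hI hJ ▸ this
    have : v ∈ S ∩ (J ∪ nbhd G J) := mem_inter.2 ⟨hc S hS, hv⟩
    rwa [hSJ] at this
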